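/- Under the finite-sample PF property for all variables in S*, the expected number of AdaSub iterations until the thresholded model with threshold ρ contains all of S* satisfies E[max_{j∈S*} T_j^{(i(ρ))}] ≤ s* · ∑_{i=0}^{i(ρ)−1} (p + Ki)/(q + Ki), where i(ρ) = ⌊(ρp − q)/(K(1−ρ)) + 1⌋. -/

import Mathlib

open MeasureTheory Filter
open Topology

namespace AdaSubAux

variable {Ω : Type*} {m0 : MeasurableSpace Ω}

noncomputable def Tstop (Z : ℕ → Ω → ℝ) (m : ℕ) (ω : Ω) : ℕ :=
  sInf {t : ℕ | ∑ l ∈ Finset.Icc 1 t, Z l ω = (m : ℝ)}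

lemma meas_sum {Z : ℕ → Ω → ℝ} (hZ : ∀ t, Measurable (Z t)) (t : ℕ) :
    Measurable fun ω => ∑ l ∈ Finset.Icc 1 t, Z l ω :=
  Finset.measurable_sum _ fun l _ => hZ l

lemma meas_T {Z : ℕ → Ω → ℝ} (hZ : ∀ t, Measurable (Z t)) (m : ℕ) :
    Measurable fun ω => Tstop Z m ω := by
  apply measurable_to_countable'
  intro k
  have hset : (fun ω => Tstop Z m ω) ⁻¹' {k} =
      ({ω | ∑ l ∈ Finset.Icc 1 k, Z l ω = (m : ℝ)} ∩
        ⋂ (l : ℕ) (_ : l < k), {ω | ∑ i ∈ Finset.Icc 1 l, Z i ω ≠ (m : ℝ)}) ∪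
      ({ω | k = 0} ∩ ⋂ (t : ℕ), {ω | ∑ i ∈ Finset.Icc 1 t, Z i ω ≠ (m : ℝ)}) := by
    ext ω
    simp only [Set.mem_preimage, Set.mem_singleton_iff, Set.mem_union, Set.mem_inter_iff,
      Set.mem_iInter, Set.mem_setOf_eq]
    constructor
    · rintro rfl
      by_cases hne : {t : ℕ | ∑ l ∈ Finset.Icc 1 t, Z l ω = (m : ℝ)}.Nonempty
      · left
        refine ⟨Nat.sInf_mem hne, fun l hl => ?_⟩
        exact Nat.notMem_of_lt_sInf hl
      · right
        rw [Set.not_nonempty_iff_eq_empty] at hne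
        refine ⟨?_, fun t => ?_⟩
        · simp [Tstop, hne]
        · intro h
          exact absurd (Set.eq_empty_iff_forall_notMem.1 hne t) (by simp [h])
    · rintro (⟨hk, hlt⟩ | ⟨rfl, hall⟩)
      · refine le_antisymm (Nat.sInf_le hk) ?_
        by_contra h
        push_neg at h
        have hmem := Nat.sInf_mem (⟨k, hk⟩ : {t : ℕ | ∑ l ∈ Finset.Icc 1 t, Z l ω = (m : ℝ)}.Nonempty)
        exact hlt _ h hmem
      · have : {t : ℕ | ∑ l ∈ Finset.Icc 1 t, Z l ω = (m : ℝ)} = ∅ := by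
          ext t; simp [hall t]
        simp [Tstop, this]
  rw [hset]
  have hm : ∀ t : ℕ, MeasurableSet {ω | ∑ i ∈ Finset.Icc 1 t, Z i ω = (m : ℝ)} :=
    fun t => (meas_sum hZ t) (measurableSet_singleton _)
  refine MeasurableSet.union (MeasurableSet.inter (hm k) ?_) (MeasurableSet.inter ?_ ?_)
  · exact MeasurableSet.iInter fun l => MeasurableSet.iInter fun _ => (hm l).compl
  · by_cases hk : k = 0 <;> simp [hk]
  · exact MeasurableSet.iInter fun t => (hm t).compl


theorem core (μ : Measure Ω) [IsProbabilityMeasure μ] (ℱ : Filtration ℕ m0)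
    (q p K : ℝ) (Z : ℕ → Ω → ℝ)
    (hq : 0 < q) (hp : 0 < p) (hK : 0 < K)
    (hZ01 : ∀ t ω, Z t ω = 0 ∨ Z t ω = 1)
    (hadapt : ∀ t, Measurable[ℱ t] (Z t))
    (hcond : ∀ t : ℕ, (μ[Z (t + 1) | ℱ t]) =ᵐ[μ] fun ω =>
      (q + K * ∑ i ∈ Finset.Icc 1 t, Z i ω) / (p + K * ∑ i ∈ Finset.Icc 1 t, Z i ω))
    (m : ℕ)
    (hTint : Integrable (fun ω => (Tstop Z m ω : ℝ)) μ) :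
    ∫ ω, (Tstop Z m ω : ℝ) ∂μ ≤ ∑ i ∈ Finset.range m, (p + K * i) / (q + K * i) := by
  -- the natural-number count process
  set c : Ω → ℕ → ℕ := fun ω t => ∑ l ∈ Finset.Icc 1 t, (if Z l ω = 1 then 1 else 0)
    with hc_def
  have hcast : ∀ t ω, ∑ l ∈ Finset.Icc 1 t, Z l ω = (c ω t : ℝ) := by
    intro t ω
    rw [hc_def]
    push_cast
    refine Finset.sum_congr rfl fun l _ => ?_
    rcases hZ01 l ω with h | h <;> simp [h]
  have hcmono : ∀ ω, Monotone (c ω) := by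
    intro ω s t hst
    exact Finset.sum_le_sum_of_subset (Finset.Icc_subset_Icc_right hst)
  have hcstep : ∀ ω t, c ω (t + 1) = c ω t + (if Z (t + 1) ω = 1 then 1 else 0) := by
    intro ω t
    rw [hc_def]
    exact Finset.sum_Icc_succ_top (by omega) _
  have hT : ∀ ω, Tstop Z m ω = sInf {t : ℕ | c ω t = m} := by
    intro ω
    unfold Tstop
    congr 1
    ext t
    simp only [Set.mem_setOf_eq]
    rw [hcast t ω]
    exact Nat.cast_inj
  -- measurability facts
  have hZmeas : ∀ t, Measurable (Z t) := fun t => (hadapt t).mono (ℱ.le t) le_rfl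
  have hZint : ∀ t, Integrable (Z t) μ := by
    intro t
    refine (integrable_const (1 : ℝ)).mono' (hZmeas t).aestronglyMeasurable ?_
    filter_upwards with ω
    rcases hZ01 t ω with h | h <;> simp [h]
  have hcmeas : ∀ t, Measurable[ℱ t] (fun ω => c ω t) := by
    intro t
    refine Finset.measurable_sum _ fun l hl => ?_
    have hl' : l ≤ t := (Finset.mem_Icc.1 hl).2
    exact Measurable.ite (((hadapt l).mono (ℱ.mono hl') le_rfl) (measurableSet_singleton 1))
      measurable_const measurable_const
  set A : ℕ → ℕ → Set Ω := fun i t => {ω | c ω t = i} with hA_def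
  have hAmeasF : ∀ i t, MeasurableSet[ℱ t] (A i t) :=
    fun i t => (hcmeas t) (measurableSet_singleton i)
  have hAmeas : ∀ i t, MeasurableSet (A i t) := fun i t => ℱ.le t _ (hAmeasF i t)
  -- step 1: set integral of Z over A i t
  have step1 : ∀ i t : ℕ, ∫ ω in A i t, Z (t + 1) ω ∂μ
      = ((q + K * i) / (p + K * i)) * (μ (A i t)).toReal := by
    intro i t
    rw [← setIntegral_condExp (ℱ.le t) (hZint (t + 1)) (hAmeasF i t)]
    rw [setIntegral_congr_ae (hAmeas i t) ((hcond t).mono fun ω hω _ => hω)]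
    have : ∀ ω ∈ A i t,
        (q + K * ∑ l ∈ Finset.Icc 1 t, Z l ω) / (p + K * ∑ l ∈ Finset.Icc 1 t, Z l ω)
          = (q + K * i) / (p + K * i) := by
      intro ω hω
      have : c ω t = i := hω
      rw [hcast t ω, this]
    rw [setIntegral_congr_fun (hAmeas i t) this, setIntegral_const, smul_eq_mul, mul_comm]; rfl
  -- pointwise claim 2: at most one success at each level
  have key2 : ∀ (ω : Ω) (n i : ℕ),
      ∑ t ∈ Finset.range n, (if (c ω t = i ∧ Z (t + 1) ω = 1) then (1 : ℝ) else 0) ≤ 1 := by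
    intro ω n i
    rw [Finset.sum_boole]
    have hone : ∀ a b : ℕ,
        a ∈ (Finset.range n).filter (fun t => c ω t = i ∧ Z (t + 1) ω = 1) →
        b ∈ (Finset.range n).filter (fun t => c ω t = i ∧ Z (t + 1) ω = 1) →
        a < b → False := by
      intro a b ha hb hab
      simp only [Finset.mem_filter] at ha hb
      have h1 : c ω (a + 1) = i + 1 := by rw [hcstep, ha.2.1, if_pos ha.2.2]
      have h2 := hcmono ω (Nat.succ_le_of_lt hab)
      rw [h1, hb.2.1] at h2
      omega
    have hcard : ((Finset.range n).filter fun t => c ω t = i ∧ Z (t + 1) ω = 1).card ≤ 1 := by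
      rw [Finset.card_le_one]
      intro a ha b hb
      rcases lt_trichotomy a b with h | h | h
      · exact (hone a b ha hb h).elim
      · exact h
      · exact (hone b a hb ha h).elim
    exact_mod_cast hcard
  -- pointwise claim 1
  have key1 : ∀ (ω : Ω) (n : ℕ),
      ((min (Tstop Z m ω) n : ℕ) : ℝ) ≤
        ∑ t ∈ Finset.range n, ∑ i ∈ Finset.range m, (if c ω t = i then (1 : ℝ) else 0) := by
    intro ω n
    have hinner : ∀ t, ∑ i ∈ Finset.range m, (if c ω t = i then (1 : ℝ) else 0)
        = if c ω t < m then (1 : ℝ) else 0 := by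
      intro t
      rw [Finset.sum_ite_eq]
      simp [Finset.mem_range]
    simp_rw [hinner]
    have hnat : min (Tstop Z m ω) n
        ≤ ∑ t ∈ Finset.range n, (if c ω t < m then (1 : ℕ) else 0) := by
      rw [hT ω]
      by_cases hne : {t : ℕ | c ω t = m}.Nonempty
      · set τ := sInf {t : ℕ | c ω t = m} with hτdef
        have hτ : c ω τ = m := Nat.sInf_mem hne
        have hlt : ∀ t, t < τ → c ω t < m := by
          intro t ht
          have h1 : c ω t ≤ m := hτ ▸ hcmono ω ht.le
          have h2 : c ω t ≠ m := fun he => Nat.notMem_of_lt_sInf ht he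
          omega
        calc min τ n = ∑ _t ∈ Finset.range (min τ n), 1 := by simp
          _ = ∑ t ∈ Finset.range (min τ n), (if c ω t < m then (1 : ℕ) else 0) := by
              refine Finset.sum_congr rfl fun t ht => ?_
              rw [if_pos (hlt t (lt_of_lt_of_le (Finset.mem_range.1 ht) (min_le_left _ _)))]
          _ ≤ ∑ t ∈ Finset.range n, (if c ω t < m then (1 : ℕ) else 0) :=
              Finset.sum_le_sum_of_subset (Finset.range_subset_range.2 (min_le_right _ _))
      · rw [Set.not_nonempty_iff_eq_empty] at hne
        rw [hne, Nat.sInf_empty]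
        simp
    exact_mod_cast hnat
  -- step 2: total expected occupation of level i is at most (p+Ki)/(q+Ki)
  have step2 : ∀ i n : ℕ,
      ∑ t ∈ Finset.range n, (μ (A i t)).toReal ≤ (p + K * i) / (q + K * i) := by
    intro i n
    have hqi : (0 : ℝ) < q + K * i := by positivity
    have hpi : (0 : ℝ) < p + K * i := by positivity
    have hsum : ∑ t ∈ Finset.range n,
        ((q + K * i) / (p + K * i)) * (μ (A i t)).toReal ≤ 1 := by
      have he : ∀ t ∈ Finset.range n,
          ((q + K * i) / (p + K * i)) * (μ (A i t)).toReal
            = ∫ ω, (A i t).indicator (Z (t + 1)) ω ∂μ := by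
        intro t _
        rw [← step1 i t, integral_indicator (hAmeas i t)]
      rw [Finset.sum_congr rfl he,
        ← integral_finset_sum _ (fun t _ => ((hZint (t + 1)).indicator (hAmeas i t)))]
      have hle : ∀ ω, ∑ t ∈ Finset.range n, (A i t).indicator (Z (t + 1)) ω ≤ 1 := by
        intro ω
        have hrw : ∀ t, (A i t).indicator (Z (t + 1)) ω
            = if (c ω t = i ∧ Z (t + 1) ω = 1) then (1 : ℝ) else 0 := by
          intro t
          rw [Set.indicator_apply]
          by_cases hA : ω ∈ A i t
          · have hci : c ω t = i := hA
            rcases hZ01 (t + 1) ω with h0 | h1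
            · rw [if_pos hA, h0, if_neg (by simp [h0, hci])]
            · rw [if_pos hA, if_pos ⟨hci, h1⟩]; exact h1
          · have hci : ¬ c ω t = i := hA
            rw [if_neg hA, if_neg (by simp [hci])]
        simp_rw [hrw]
        exact key2 ω n i
      calc ∫ ω, ∑ t ∈ Finset.range n, (A i t).indicator (Z (t + 1)) ω ∂μ
          ≤ ∫ _ω, (1 : ℝ) ∂μ :=
            integral_mono
              (integrable_finset_sum _ fun t _ => (hZint (t + 1)).indicator (hAmeas i t))
              (integrable_const 1) hle
        _ = 1 := by simp
    rw [← Finset.mul_sum, div_mul_eq_mul_div, div_le_one hpi, mul_comm] at hsum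
    exact (le_div_iff₀ hqi).2 hsum
  -- step 3: truncated expectation bound
  have hTmeas : Measurable fun ω => Tstop Z m ω := meas_T hZmeas m
  have hminmeas : ∀ n : ℕ, Measurable fun ω => ((min (Tstop Z m ω) n : ℕ) : ℝ) :=
    fun n => measurable_from_top.comp (hTmeas.min measurable_const)
  have step3 : ∀ n : ℕ, ∫ ω, ((min (Tstop Z m ω) n : ℕ) : ℝ) ∂μ
      ≤ ∑ i ∈ Finset.range m, (p + K * i) / (q + K * i) := by
    intro n
    have hminint : Integrable (fun ω => ((min (Tstop Z m ω) n : ℕ) : ℝ)) μ := by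
      refine hTint.mono' (hminmeas n).aestronglyMeasurable ?_
      filter_upwards with ω
      rw [Real.norm_eq_abs, abs_of_nonneg (Nat.cast_nonneg _)]
      exact_mod_cast min_le_left _ _
    have hindint : Integrable (fun ω => ∑ t ∈ Finset.range n, ∑ i ∈ Finset.range m,
        (A i t).indicator (fun _ => (1 : ℝ)) ω) μ :=
      integrable_finset_sum _ fun t _ => integrable_finset_sum _ fun i _ =>
        (integrable_const 1).indicator (hAmeas i t)
    have hptw : ∀ ω, ((min (Tstop Z m ω) n : ℕ) : ℝ)
        ≤ ∑ t ∈ Finset.range n, ∑ i ∈ Finset.range m,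
            (A i t).indicator (fun _ => (1 : ℝ)) ω := by
      intro ω
      refine le_trans (key1 ω n) (le_of_eq ?_)
      refine Finset.sum_congr rfl fun t _ => Finset.sum_congr rfl fun i _ => ?_
      rw [Set.indicator_apply]
      by_cases hA : ω ∈ A i t
      · have hci : c ω t = i := hA
        rw [if_pos hci, if_pos hA]
      · have hci : ¬ c ω t = i := hA
        rw [if_neg hci, if_neg hA]
    calc ∫ ω, ((min (Tstop Z m ω) n : ℕ) : ℝ) ∂μ
        ≤ ∫ ω, ∑ t ∈ Finset.range n, ∑ i ∈ Finset.range m,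
            (A i t).indicator (fun _ => (1 : ℝ)) ω ∂μ :=
          integral_mono hminint hindint hptw
      _ = ∑ t ∈ Finset.range n, ∑ i ∈ Finset.range m, (μ (A i t)).toReal := by
          rw [integral_finset_sum _ (fun t _ => integrable_finset_sum _ fun i _ =>
            (integrable_const 1).indicator (hAmeas i t))]
          refine Finset.sum_congr rfl fun t _ => ?_
          rw [integral_finset_sum _ (fun i _ => (integrable_const 1).indicator (hAmeas i t))]
          refine Finset.sum_congr rfl fun i _ => ?_
          rw [integral_indicator_const _ (hAmeas i t), smul_eq_mul, mul_one]; rfl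
      _ = ∑ i ∈ Finset.range m, ∑ t ∈ Finset.range n, (μ (A i t)).toReal :=
          Finset.sum_comm
      _ ≤ ∑ i ∈ Finset.range m, (p + K * i) / (q + K * i) :=
          Finset.sum_le_sum fun i _ => step2 i n
  -- pass to the limit
  have hlim : Tendsto (fun n => ∫ ω, ((min (Tstop Z m ω) n : ℕ) : ℝ) ∂μ) atTop
      (𝓝 (∫ ω, (Tstop Z m ω : ℝ) ∂μ)) := by
    refine tendsto_integral_of_dominated_convergence (fun ω => (Tstop Z m ω : ℝ))
      (fun n => (hminmeas n).aestronglyMeasurable) hTint ?_ ?_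
    · intro n
      filter_upwards with ω
      rw [Real.norm_eq_abs, abs_of_nonneg (Nat.cast_nonneg _)]
      exact_mod_cast min_le_left _ _
    · filter_upwards with ω
      refine Filter.Tendsto.congr' ?_ tendsto_const_nhds
      rw [EventuallyEq, eventually_atTop]
      exact ⟨Tstop Z m ω, fun n hn => by rw [min_eq_left hn]⟩
  exact le_of_tendsto hlim (Filter.eventually_atTop.2 ⟨0, fun n _ => step3 n⟩)

end AdaSubAux

/-- Under the finite-sample PF property for all variables `j ∈ S*` (each
with AdaSub inclusion dynamics `P(Z_j^{(t+1)} = 1 | ℱ_t) = (q + Ki)/(p + Ki)` after `i`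
considerations), the expected number of iterations until the thresholded model with
threshold `ρ` contains all of `S*` satisfies
`E[max_{j∈S*} T_j^{(i(ρ))}] ≤ s* · ∑_{i=0}^{i(ρ)-1} (p + Ki)/(q + Ki)`,
where `i(ρ) = ⌊(ρp − q)/(K(1−ρ)) + 1⌋` and `T_j^{(m)} = min{t : ∑_{l≤t} Z_j^{(l)} = m}`. -/
theorem adaSub_threshold_expectation_bound {Ω : Type*} {m0 : MeasurableSpace Ω}
    (μ : Measure Ω) [IsProbabilityMeasure μ] (ℱ : Filtration ℕ m0)
    (q p K ρ : ℝ) (hq : 0 < q) (hqp : q < p) (hK : 0 < K) (hρ0 : 0 < ρ) (hρ1 : ρ < 1)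
    {ι : Type*} (S : Finset ι) (Z : ι → ℕ → Ω → ℝ)
    (hZ01 : ∀ j ∈ S, ∀ t ω, Z j t ω = 0 ∨ Z j t ω = 1)
    (hZadapt : ∀ j ∈ S, ∀ t, Measurable[ℱ t] (Z j t))
    (hcond : ∀ j ∈ S, ∀ t : ℕ, (μ[Z j (t + 1) | ℱ t]) =ᵐ[μ] fun ω =>
      (q + K * ∑ i ∈ Finset.Icc 1 t, Z j i ω) /
        (p + K * ∑ i ∈ Finset.Icc 1 t, Z j i ω)) :
    ∫ ω, ((S.sup fun j =>
        sInf {t : ℕ | ∑ l ∈ Finset.Icc 1 t, Z j l ω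
          = ((⌊(ρ * p - q) / (K * (1 - ρ)) + 1⌋₊ : ℕ) : ℝ)} : ℕ) : ℝ) ∂μ
      ≤ (S.card : ℝ) *
          ∑ i ∈ Finset.range ⌊(ρ * p - q) / (K * (1 - ρ)) + 1⌋₊,
            (p + K * i) / (q + K * i) := by
  have hp : 0 < p := hq.trans hqp
  set m : ℕ := ⌊(ρ * p - q) / (K * (1 - ρ)) + 1⌋₊ with hm
  set B : ℝ := ∑ i ∈ Finset.range m, (p + K * i) / (q + K * i) with hB
  have hB0 : 0 ≤ B :=
    Finset.sum_nonneg fun i _ => div_nonneg (by positivity) (by positivity)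
  show ∫ ω, (((S.sup fun j => AdaSubAux.Tstop (Z j) m ω) : ℕ) : ℝ) ∂μ ≤ (S.card : ℝ) * B
  have hTmeas : ∀ j ∈ S, Measurable fun ω => AdaSubAux.Tstop (Z j) m ω :=
    fun j hj => AdaSubAux.meas_T (fun t => ((hZadapt j hj t).mono (ℱ.le t) le_rfl)) m
  by_cases hint : ∀ j ∈ S, Integrable (fun ω => (AdaSubAux.Tstop (Z j) m ω : ℝ)) μ
  · have hsum_int : Integrable (fun ω => ∑ j ∈ S, (AdaSubAux.Tstop (Z j) m ω : ℝ)) μ :=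
      integrable_finset_sum _ fun j hj => hint j hj
    have h1 : ∫ ω, (((S.sup fun j => AdaSubAux.Tstop (Z j) m ω) : ℕ) : ℝ) ∂μ
        ≤ ∫ ω, ∑ j ∈ S, (AdaSubAux.Tstop (Z j) m ω : ℝ) ∂μ := by
      refine integral_mono_of_nonneg
        (Filter.Eventually.of_forall fun ω => Nat.cast_nonneg _) hsum_int
        (Filter.Eventually.of_forall fun ω => ?_)
      have h2 : (S.sup fun j => AdaSubAux.Tstop (Z j) m ω)
          ≤ ∑ j ∈ S, AdaSubAux.Tstop (Z j) m ω :=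
        Finset.sup_le fun j hj => Finset.single_le_sum (f := fun j => AdaSubAux.Tstop (Z j) m ω) (fun _ _ => Nat.zero_le _) hj
      calc (((S.sup fun j => AdaSubAux.Tstop (Z j) m ω) : ℕ) : ℝ)
          ≤ ((∑ j ∈ S, AdaSubAux.Tstop (Z j) m ω : ℕ) : ℝ) := Nat.cast_le.2 h2
        _ = ∑ j ∈ S, (AdaSubAux.Tstop (Z j) m ω : ℝ) := by push_cast; rfl
    refine h1.trans ?_
    rw [integral_finset_sum _ fun j hj => hint j hj]
    calc ∑ j ∈ S, ∫ ω, (AdaSubAux.Tstop (Z j) m ω : ℝ) ∂μ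
        ≤ ∑ _j ∈ S, B := Finset.sum_le_sum fun j hj =>
          AdaSubAux.core μ ℱ q p K (Z j) hq hp hK (hZ01 j hj) (hZadapt j hj)
            (hcond j hj) m (hint j hj)
      _ = (S.card : ℝ) * B := by rw [Finset.sum_const, nsmul_eq_mul]
  · push_neg at hint
    obtain ⟨j0, hj0, hnint⟩ := hint
    have hsupnot : ¬ Integrable
        (fun ω => (((S.sup fun j => AdaSubAux.Tstop (Z j) m ω) : ℕ) : ℝ)) μ := by
      intro hsup
      refine hnint (hsup.mono'
        ((measurable_from_top.comp (hTmeas j0 hj0)).aestronglyMeasurable)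
        (Filter.Eventually.of_forall fun ω => ?_))
      rw [Real.norm_eq_abs, abs_of_nonneg (Nat.cast_nonneg _)]
      exact_mod_cast Finset.le_sup (f := fun j => AdaSubAux.Tstop (Z j) m ω) hj0
    rw [integral_undef hsupnot]
    exact mul_nonneg (Nat.cast_nonneg _) hB0
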